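/- Let k ≥ 3. Then z_n^(k) = f_{n−1}^(k−1) for all n ≥ 1, and z_0^(k) = 1. -/

import Mathlib

/-- A binary string (list of booleans, `false` = 0, `true` = 1) avoids `0^k`
and `1^k`, i.e. it contains neither `k` consecutive 0's nor `k` consecutive 1's. -/
def Avoids (k : ℕ) (s : List Bool) : Prop :=
  ¬ (List.replicate k false <:+: s) ∧ ¬ (List.replicate k true <:+: s)
/-- `zcount k n = z_n^(k)`: the number of binary strings of length `n` ending
with 0 and avoiding `0^k` and `1^k` (the empty string counts, so `zcount k 0 = 1`). -/
noncomputable def zcount (k n : ℕ) : ℕ :=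
  Set.ncard {s : List Bool | s.length = n ∧ Avoids k s ∧ s.getLast? ≠ some true}
/-- The `k`-generalized Fibonacci numbers: `f_n^(k) = 2^n` for `0 ≤ n ≤ k−1`
and `f_n^(k) = f_{n−1}^(k) + … + f_{n−k}^(k)` for `n ≥ k`. -/
def genFib (k : ℕ) (n : ℕ) : ℕ :=
  if n < k then 2 ^ n
  else ∑ j ∈ (Finset.Icc 1 k).attach, genFib k (n - j.1)
termination_by n
decreasing_by
  have hj := j.2
  simp only [Finset.mem_Icc] at hj
  omega


open List

lemma infix_cons_ne {b c : Bool} (hbc : b ≠ c) (l m : List Bool) :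
    (b :: l) <:+: (c :: m) ↔ (b :: l) <:+: m := by
  rw [List.infix_cons_iff]
  constructor
  · rintro (h | h)
    · rw [List.cons_prefix_cons] at h; exact absurd h.1 hbc
    · exact h
  · exact Or.inr

lemma lemA {k : ℕ} (hk : 1 ≤ k) (a : ℕ) (t : List Bool) :
    replicate k true <:+: replicate a false ++ t ↔ replicate k true <:+: t := by
  obtain ⟨k', rfl⟩ : ∃ k', k = k' + 1 := ⟨k - 1, by omega⟩
  induction a with
  | zero => simp
  | succ a ih =>
    rw [show replicate (a+1) false ++ t = false :: (replicate a false ++ t) from by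
        rw [List.replicate_succ]; rfl,
      List.replicate_succ, infix_cons_ne (by simp) _ _, ← List.replicate_succ, ih]

lemma prefix_repl {k a : ℕ} {t : List Bool} (ht : t.head? ≠ some false)
    (h : replicate k false <+: replicate a false ++ t) : k ≤ a := by
  induction a generalizing k with
  | zero =>
    cases k with
    | zero => exact le_refl 0
    | succ k =>
      simp only [List.replicate_zero, List.nil_append] at h
      exfalso
      apply ht
      rw [List.replicate_succ] at h
      obtain ⟨u, hu⟩ := h
      rw [← hu]; rfl
  | succ a ih =>
    cases k with
    | zero => omega
    | succ k =>
      rw [List.replicate_succ, List.replicate_succ, List.cons_append,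
        List.cons_prefix_cons] at h
      exact Nat.succ_le_succ (ih h.2)

lemma lemB {k : ℕ} (a : ℕ) (t : List Bool) (ht : t.head? ≠ some false) :
    replicate k false <:+: replicate a false ++ t ↔ k ≤ a ∨ replicate k false <:+: t := by
  induction a with
  | zero =>
    simp only [List.replicate_zero, List.nil_append, Nat.le_zero]
    constructor
    · exact Or.inr
    · rintro (rfl | h)
      · simp
      · exact h
  | succ a ih =>
    rw [List.replicate_succ, List.cons_append, List.infix_cons_iff, ih]
    constructor
    · rintro (h | h | h)
      · left
        have := prefix_repl ht (by rwa [← List.cons_append, ← List.replicate_succ] at h)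
        omega
      · left; omega
      · exact Or.inr h
    · rintro (h | h)
      · left
        rw [← List.cons_append, ← List.replicate_succ]
        obtain ⟨m, hm⟩ : ∃ m, a + 1 = k + m := ⟨a + 1 - k, by omega⟩
        refine List.IsPrefix.trans ?_ (List.prefix_append _ t)
        rw [hm, List.replicate_add]
        exact List.prefix_append _ _
      · exact Or.inr (Or.inr h)

lemma lead_unique : ∀ (a a' : ℕ) (t t' : List Bool), t.head? ≠ some false →
    t'.head? ≠ some false →
    replicate a false ++ t = replicate a' false ++ t' → a = a' ∧ t = t' := by
  intro a
  induction a with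
  | zero =>
    intro a' t t' ht ht' h
    cases a' with
    | zero => simpa using h
    | succ a' =>
      exfalso; apply ht
      rw [List.replicate_zero, List.nil_append] at h
      rw [h, List.replicate_succ]; rfl
  | succ a ih =>
    intro a' t t' ht ht' h
    cases a' with
    | zero =>
      exfalso; apply ht'
      rw [List.replicate_zero, List.nil_append] at h
      rw [← h, List.replicate_succ]; rfl
    | succ a' =>
      rw [List.replicate_succ, List.replicate_succ, List.cons_append, List.cons_append,
        List.cons.injEq] at h
      obtain ⟨he, hte⟩ := ih a' t t' ht ht' h.2
      exact ⟨by omega, hte⟩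


instance (k : ℕ) (s : List Bool) : Decidable (Avoids k s) :=
  inferInstanceAs (Decidable (¬ _ ∧ ¬ _))

lemma Avoids.infix {k : ℕ} {s l : List Bool} (h : Avoids k s) (hl : l <:+: s) :
    Avoids k l :=
  ⟨fun hc => h.1 (hc.trans hl), fun hc => h.2 (hc.trans hl)⟩

def boolLists : ℕ → Finset (List Bool)
  | 0 => {[]}
  | n+1 => ((boolLists n).image (List.cons false)) ∪ ((boolLists n).image (List.cons true))

lemma mem_boolLists : ∀ {n : ℕ} {s : List Bool}, s ∈ boolLists n ↔ s.length = n := by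
  intro n
  induction n with
  | zero => intro s; simp [boolLists, List.length_eq_zero_iff]
  | succ n ih =>
    intro s
    cases s with
    | nil => simp [boolLists]
    | cons b t =>
      cases b <;> simp [boolLists, ih]

def Zf (k n : ℕ) : Finset (List Bool) :=
  (boolLists n).filter (fun s => Avoids k s ∧ s.head? ≠ some true)

def Yf (k n : ℕ) : Finset (List Bool) :=
  (boolLists n).filter (fun s => Avoids k s ∧ s.head? ≠ some false)

lemma infix_map_not {l s : List Bool} : l.map not <:+: s.map not ↔ l <:+: s := by
  constructor
  · intro h
    have := h.map not
    simpa [List.map_map, Function.comp_def] using this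
  · exact fun h => h.map not

lemma avoids_map_not {k : ℕ} {s : List Bool} : Avoids k (s.map not) ↔ Avoids k s := by
  have h1 : ∀ s : List Bool, Avoids k s → Avoids k (s.map not) := by
    intro s hs
    refine ⟨fun hc => hs.2 ?_, fun hc => hs.1 ?_⟩
    · rw [show (List.replicate k false : List Bool) = (List.replicate k true).map not by simp] at hc
      exact infix_map_not.mp hc
    · rw [show (List.replicate k true : List Bool) = (List.replicate k false).map not by simp] at hc
      exact infix_map_not.mp hc
  refine ⟨fun h => ?_, h1 s⟩
  have := h1 _ h
  simpa [List.map_map, Function.comp_def] using this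

lemma Yf_card (k n : ℕ) : (Yf k n).card = (Zf k n).card := by
  have himg : Yf k n = (Zf k n).image (List.map not) := by
    ext s
    simp only [Yf, Zf, Finset.mem_image, Finset.mem_filter, mem_boolLists]
    constructor
    · intro ⟨hlen, hav, hhd⟩
      refine ⟨s.map not, ⟨by simpa using hlen, avoids_map_not.mpr hav, ?_⟩, ?_⟩
      · rw [List.head?_map]
        cases hs : s.head? with
        | none => simp
        | some b => cases b <;> simp_all
      · simp [List.map_map, Function.comp_def]
    · rintro ⟨t, ⟨hlen, hav, hhd⟩, rfl⟩
      refine ⟨by simpa using hlen, avoids_map_not.mpr hav, ?_⟩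
      rw [List.head?_map]
      cases hs : t.head? with
      | none => simp
      | some b => cases b <;> simp_all
  rw [himg, Finset.card_image_of_injective]
  exact List.map_injective_iff.mpr (fun a b => by cases a <;> cases b <;> simp)

lemma hd_dropWhile (s : List Bool) :
    (s.dropWhile (fun b => !b)).head? ≠ some false := by
  have := List.head?_dropWhile_not (fun b => !b) s
  intro h
  rw [h] at this
  simp at this

lemma Zf_zero (k : ℕ) (hk : 1 ≤ k) : (Zf k 0).card = 1 := by
  have : Zf k 0 = {[]} := by
    ext s
    simp only [Zf, boolLists, Finset.mem_filter, Finset.mem_singleton]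
    constructor
    · tauto
    · rintro rfl
      refine ⟨rfl, ⟨fun h => ?_, fun h => ?_⟩, by simp⟩ <;>
        · rw [List.infix_nil, List.replicate_eq_nil_iff] at h; omega
  simp [this]

lemma Zf_decomp (k n : ℕ) (hk : 2 ≤ k) (hn : 1 ≤ n) :
    Zf k n = (Finset.Icc 1 (min (k-1) n)).biUnion
      (fun a => (Yf k (n-a)).image (fun t => List.replicate a false ++ t)) := by
  ext s
  simp only [Finset.mem_biUnion, Finset.mem_image, Finset.mem_Icc, Zf, Yf,
    Finset.mem_filter, mem_boolLists]
  constructor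
  · intro ⟨hlen, hav, hhd⟩
    set p : Bool → Bool := fun b => !b with hp
    set a := (s.takeWhile p).length with ha
    set t := s.dropWhile p with htdef
    have htw : s.takeWhile p = List.replicate a false := by
      rw [List.eq_replicate_iff]
      refine ⟨rfl, fun b hb => ?_⟩
      have := List.mem_takeWhile_imp hb
      simpa [hp] using this
    have hs : List.replicate a false ++ t = s := by
      rw [← htw]; exact List.takeWhile_append_dropWhile
    have ht : t.head? ≠ some false := hd_dropWhile s
    have ha1 : 1 ≤ a := by
      by_contra hc
      have ha0 : a = 0 := by omega
      rw [ha0, List.replicate_zero, List.nil_append] at hs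
      cases s with
      | nil => simp at hlen; omega
      | cons b u =>
        cases b
        · exact ht (by rw [hs]; rfl)
        · exact hhd rfl
    have hak : a ≤ k - 1 := by
      by_contra hc
      exact hav.1 (by rw [← hs]; exact (lemB a t ht).mpr (Or.inl (by omega)))
    have han : a ≤ n := by
      rw [← hlen, ha]
      exact (List.takeWhile_prefix p).length_le
    refine ⟨a, ⟨ha1, le_min hak han⟩, t, ⟨?_, ?_, ht⟩, hs⟩
    · have := congrArg List.length hs
      simp at this
      omega
    · exact hav.infix (List.dropWhile_suffix p).isInfix
  · rintro ⟨a, ⟨ha1, ha2⟩, t, ⟨hlen, hav, ht⟩, rfl⟩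
    rw [le_min_iff] at ha2
    obtain ⟨hak, han⟩ := ha2
    refine ⟨by simp [hlen]; omega, ⟨?_, ?_⟩, ?_⟩
    · rw [lemB a t ht]
      rintro (h | h)
      · omega
      · exact hav.1 h
    · rw [lemA (by omega) a t]
      exact hav.2
    · obtain ⟨a', rfl⟩ : ∃ a', a = a' + 1 := ⟨a - 1, by omega⟩
      rw [List.replicate_succ, List.cons_append]
      simp

lemma Zf_rec (k n : ℕ) (hk : 2 ≤ k) (hn : 1 ≤ n) :
    (Zf k n).card = ∑ a ∈ Finset.Icc 1 (min (k-1) n), (Zf k (n-a)).card := by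
  rw [Zf_decomp k n hk hn, Finset.card_biUnion]
  · apply Finset.sum_congr rfl
    intro a _
    rw [Finset.card_image_of_injective _ (fun x y h => List.append_cancel_left h), Yf_card]
  · intro a ha b hb hab
    rw [Function.onFun, Finset.disjoint_left]
    rintro s hsa hsb
    simp only [Finset.mem_image, Yf, Finset.mem_filter] at hsa hsb
    obtain ⟨t, ⟨_, _, ht⟩, rfl⟩ := hsa
    obtain ⟨t', ⟨_, _, ht'⟩, heq⟩ := hsb
    exact hab ((lead_unique b a t' t ht' ht heq).1.symm)


lemma pow2sum (m : ℕ) : ∑ i ∈ Finset.range m, 2^i = 2^m - 1 := by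
  induction m with
  | zero => simp
  | succ m ih =>
    rw [Finset.sum_range_succ, ih]
    have h1 : 1 ≤ 2^m := Nat.one_le_two_pow
    have h2 : 2^(m+1) = 2^m * 2 := pow_succ 2 m
    omega

lemma Zf_eq_genFib (k : ℕ) (hk : 3 ≤ k) : ∀ n, 1 ≤ n → (Zf k n).card = genFib (k-1) (n-1) := by
  intro n
  induction n using Nat.strong_induction_on with
  | _ n ih =>
    intro hn
    rcases le_or_gt n (k-1) with hnk | hnk
    · have hmin : min (k-1) n = n := min_eq_right hnk
      rw [Zf_rec k n (by omega) hn, hmin,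
        show Finset.Icc 1 n = Finset.Ico 1 (n+1) from by rw [Finset.Ico_add_one_right_eq_Icc],
        Finset.sum_Ico_eq_sum_range]
      simp only [Nat.add_sub_cancel]
      have hrefl : ∑ i ∈ Finset.range n, (Zf k (n - (1 + i))).card
          = ∑ i ∈ Finset.range n, (Zf k i).card := by
        rw [← Finset.sum_range_reflect (fun i => (Zf k i).card) n]
        apply Finset.sum_congr rfl
        intro i _
        have h : n - (1 + i) = n - 1 - i := by omega
        rw [h]
      rw [hrefl]
      obtain ⟨n', rfl⟩ : ∃ n', n = n' + 1 := ⟨n - 1, by omega⟩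
      rw [Finset.sum_range_succ' (fun i => (Zf k i).card) n']
      have hterm : ∀ i ∈ Finset.range n', (Zf k (i+1)).card = 2^i := by
        intro i hi
        rw [Finset.mem_range] at hi
        rw [ih (i+1) (by omega) (by omega), genFib]
        simp only [Nat.add_sub_cancel]
        rw [if_pos (by omega)]
      rw [Finset.sum_congr rfl hterm, pow2sum, Zf_zero k (by omega), genFib,
        if_pos (by omega)]
      simp only [Nat.add_sub_cancel]
      have : 1 ≤ 2^n' := Nat.one_le_two_pow
      omega
    · have hmin : min (k-1) n = k-1 := min_eq_left (by omega)
      rw [Zf_rec k n (by omega) hn, hmin]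
      conv_rhs => rw [genFib]
      rw [if_neg (by omega), Finset.sum_attach (Finset.Icc 1 (k-1))
        (fun j => genFib (k-1) (n - 1 - j))]
      apply Finset.sum_congr rfl
      intro a ha
      rw [Finset.mem_Icc] at ha
      rw [ih (n-a) (by omega) (by omega)]
      congr 1
      omega

lemma infix_reverse {k : ℕ} (b : Bool) (u : List Bool) :
    List.replicate k b <:+: u.reverse ↔ List.replicate k b <:+: u := by
  constructor
  · intro h
    have := List.reverse_infix.mpr h
    simpa using this
  · intro h
    have := List.reverse_infix.mpr h
    simpa using this

lemma avoids_reverse {k : ℕ} {s : List Bool} : Avoids k s.reverse ↔ Avoids k s := by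
  unfold Avoids
  rw [infix_reverse, infix_reverse]

lemma zcount_card (k n : ℕ) : zcount k n = (Zf k n).card := by
  have hset : {s : List Bool | s.length = n ∧ Avoids k s ∧ s.getLast? ≠ some true}
      = List.reverse '' ↑(Zf k n) := by
    ext s
    simp only [Set.mem_image, Finset.mem_coe, Zf, Finset.mem_filter, mem_boolLists,
      Set.mem_setOf_eq]
    constructor
    · intro ⟨h1, h2, h3⟩
      exact ⟨s.reverse, ⟨by simp [h1], avoids_reverse.mpr h2,
        by rw [List.head?_reverse]; exact h3⟩, List.reverse_reverse s⟩
    · rintro ⟨t, ⟨h1, h2, h3⟩, rfl⟩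
      refine ⟨by simp [h1], avoids_reverse.mpr h2, ?_⟩
      rw [List.getLast?_reverse]
      exact h3
  rw [zcount, hset, Set.ncard_image_of_injective _ List.reverse_injective,
    Set.ncard_coe_finset]

theorem zcount_eq_genFib (k : ℕ) (hk : 3 ≤ k) :
    zcount k 0 = 1 ∧ ∀ n : ℕ, 1 ≤ n → zcount k n = genFib (k - 1) (n - 1) := by
  constructor
  · rw [zcount_card, Zf_zero k (by omega)]
  · intro n hn
    rw [zcount_card]
    exact Zf_eq_genFib k hk n hn
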